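/- For every real number x ≥ 1, the sum of n·φ(n) over positive integers n ≤ x is at most (2/π²)·x³ + (1/2)·x²·log x + x². -/

import Mathlib

open Finset Real

namespace MulTotientAux

open ArithmeticFunction
open scoped ArithmeticFunction.Moebius

lemma sq_sum_Icc (N : ℕ) :
    ∑ m ∈ Finset.Icc 1 N, (m : ℝ) ^ 2 = N * (N + 1) * (2 * N + 1) / 6 := by
  induction N with
  | zero => simp
  | succ n ih =>
    rw [Finset.sum_Icc_succ_top (by omega)]
    push_cast
    push_cast at ih
    rw [ih]; ring

lemma totient_moebius (n : ℕ) (hn : 0 < n) :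
    ∑ p ∈ n.divisorsAntidiagonal, (μ p.1 : ℝ) * p.2 = n.totient := by
  refine (ArithmeticFunction.sum_eq_iff_sum_mul_moebius_eq
    (R := ℝ) (f := fun n => (n.totient : ℝ)) (g := fun n => (n : ℝ))).mp ?_ n hn
  intro m hm
  exact_mod_cast congrArg (fun k : ℕ => (k : ℝ)) (Nat.sum_totient m)

lemma swap_sum (t : ℕ) (F : ℕ → ℕ → ℝ) :
    ∑ n ∈ Finset.Icc 1 t, ∑ p ∈ n.divisorsAntidiagonal, F p.1 p.2
      = ∑ d ∈ Finset.Icc 1 t, ∑ m ∈ Finset.Icc 1 (t / d), F d m := by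
  rw [Finset.sum_sigma', Finset.sum_sigma']
  refine Finset.sum_nbij' (fun p => ⟨p.2.1, p.2.2⟩) (fun p => ⟨p.1 * p.2, (p.1, p.2)⟩)
    ?_ ?_ ?_ ?_ ?_
  · rintro ⟨n, d, m⟩ h
    simp only [Finset.mem_sigma, Finset.mem_Icc, Nat.mem_divisorsAntidiagonal] at h ⊢
    obtain ⟨⟨hn1, hn2⟩, hdm, hn0⟩ := h
    have hd : 0 < d := by
      rcases Nat.eq_zero_or_pos d with h | h
      · subst h; simp at hdm; omega
      · exact h
    have hm : 0 < m := by
      rcases Nat.eq_zero_or_pos m with h | h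
      · subst h; simp at hdm; omega
      · exact h
    refine ⟨⟨hd, ?_⟩, hm, ?_⟩
    · calc d ≤ d * m := Nat.le_mul_of_pos_right d hm
        _ = n := hdm
        _ ≤ t := hn2
    · rw [Nat.le_div_iff_mul_le hd]
      calc m * d = n := by rw [mul_comm]; exact hdm
        _ ≤ t := hn2
  · rintro ⟨d, m⟩ h
    simp only [Finset.mem_sigma, Finset.mem_Icc, Nat.mem_divisorsAntidiagonal] at h ⊢
    obtain ⟨⟨hd1, hd2⟩, hm1, hm2⟩ := h
    have hdm : d * m ≤ t := by
      rw [Nat.le_div_iff_mul_le (by omega)] at hm2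
      rwa [mul_comm m d] at hm2
    have h0 : 0 < d * m := Nat.mul_pos hd1 hm1
    exact ⟨⟨h0, hdm⟩, trivial, by omega⟩
  · rintro ⟨n, d, m⟩ h
    simp only [Finset.mem_sigma, Finset.mem_Icc, Nat.mem_divisorsAntidiagonal] at h
    simp [h.2.1]
  · rintro ⟨d, m⟩ h; rfl
  · rintro ⟨n, d, m⟩ h; rfl

lemma harmonic_bound (N : ℕ) (hN : 2 ≤ N) :
    ∑ d ∈ Finset.Icc 1 N, (1 : ℝ) / d ≤ Real.log N + 3 / 2 - Real.log 2 := by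
  induction N, hN using Nat.le_induction with
  | base =>
    have : Finset.Icc 1 2 = ({1, 2} : Finset ℕ) := by decide
    rw [this]
    norm_num
  | succ n hn ih =>
    rw [Finset.sum_Icc_succ_top (by omega)]
    have hn0 : (0 : ℝ) < n := by positivity
    have h1 : Real.log ((n : ℝ) / (n + 1)) ≤ (n : ℝ) / (n + 1) - 1 :=
      Real.log_le_sub_one_of_pos (by positivity)
    rw [Real.log_div (by positivity) (by positivity)] at h1
    have h2 : (n : ℝ) / (n + 1) - 1 = -(1 / ((n : ℝ) + 1)) := by field_simp; ring
    rw [h2] at h1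
    push_cast
    push_cast at ih
    linarith

lemma tail_partial (t : ℕ) (ht : 1 ≤ t) (N : ℕ) :
    ∑ i ∈ Finset.range N, (1 : ℝ) / ((i : ℝ) + t + 1) ^ 2 ≤ 1 / (t : ℝ) := by
  have ht' : (1 : ℝ) ≤ t := by exact_mod_cast ht
  have key : ∑ i ∈ Finset.range N, (1 : ℝ) / ((i : ℝ) + t + 1) ^ 2
      ≤ 1 / (t : ℝ) - 1 / ((t : ℝ) + N) := by
    induction N with
    | zero => simp
    | succ n ih =>
      rw [Finset.sum_range_succ]
      have hb : (0 : ℝ) < (t : ℝ) + n := by positivity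
      have hb1 : (0 : ℝ) < (t : ℝ) + n + 1 := by positivity
      have hdiff : 1 / ((t : ℝ) + n) - 1 / ((t : ℝ) + n + 1)
          = 1 / (((t : ℝ) + n) * ((t : ℝ) + n + 1)) := by
        field_simp
        ring
      have hle : (1 : ℝ) / ((n : ℝ) + t + 1) ^ 2
          ≤ 1 / (((t : ℝ) + n) * ((t : ℝ) + n + 1)) := by
        apply one_div_le_one_div_of_le (by positivity)
        nlinarith
      push_cast
      push_cast at ih
      have hassoc : (t : ℝ) + ((n : ℝ) + 1) = (t : ℝ) + n + 1 := by ring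
      rw [hassoc]
      linarith [hdiff, hle, ih]
  have : (0 : ℝ) < (t : ℝ) + N := by positivity
  have h2 : (0 : ℝ) ≤ 1 / ((t : ℝ) + N) := by positivity
  linarith [key, h2]

lemma moebius_hasSum :
    HasSum (fun d : ℕ => (μ d : ℝ) / (d : ℝ) ^ 2) (6 / π ^ 2) := by
  have hs : (1 : ℝ) < (2 : ℂ).re := by norm_num
  have hsum : LSeriesSummable (fun n : ℕ => ((μ n : ℤ) : ℂ)) 2 :=
    ArithmeticFunction.LSeriesSummable_moebius_iff.mpr hs
  have hL : LSeries (fun n : ℕ => ((μ n : ℤ) : ℂ)) 2 = 6 / (π : ℂ) ^ 2 := by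
    have h1 := ArithmeticFunction.LSeries_zeta_mul_Lseries_moebius (s := 2) hs
    have h2 := ArithmeticFunction.LSeries_zeta_eq_riemannZeta (s := 2) hs
    rw [h2, riemannZeta_two] at h1
    have hpi : ((π : ℂ)) ^ 2 ≠ 0 := pow_ne_zero 2 (Complex.ofReal_ne_zero.mpr Real.pi_ne_zero)
    rw [eq_div_iff hpi]
    linear_combination 6 * h1
  have hHas : HasSum (fun n => LSeries.term (fun n : ℕ => ((μ n : ℤ) : ℂ)) 2 n)
      (6 / (π : ℂ) ^ 2) := by
    have h := hsum.hasSum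
    rwa [show (∑' n, LSeries.term (fun n : ℕ => ((μ n : ℤ) : ℂ)) 2 n)
      = LSeries (fun n : ℕ => ((μ n : ℤ) : ℂ)) 2 from rfl, hL] at h
  have heq : (fun n => LSeries.term (fun n : ℕ => ((μ n : ℤ) : ℂ)) 2 n)
      = fun n : ℕ => ((((μ n : ℝ) / (n : ℝ) ^ 2) : ℝ) : ℂ) := by
    funext n
    rcases eq_or_ne n 0 with rfl | hn
    · simp [LSeries.term]
    · rw [LSeries.term_of_ne_zero hn]
      rw [show (2 : ℂ) = ((2 : ℕ) : ℂ) by norm_num, Complex.cpow_natCast]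
      push_cast
      ring
  rw [heq] at hHas
  have h6 : ((6 / π ^ 2 : ℝ) : ℂ) = 6 / (π : ℂ) ^ 2 := by push_cast; ring
  rw [← h6] at hHas
  exact Complex.hasSum_ofReal.mp hHas

set_option maxHeartbeats 1000000 in
lemma moebius_partial (t : ℕ) (ht : 1 ≤ t) :
    ∑ d ∈ Finset.Icc 1 t, (μ d : ℝ) / (d : ℝ) ^ 2 ≤ 6 / π ^ 2 + 1 / (t : ℝ) := by
  have hsum := moebius_hasSum
  have hsummable := hsum.summable
  set f : ℕ → ℝ := fun d => (μ d : ℝ) / (d : ℝ) ^ 2 with hf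
  have hsplit := Summable.sum_add_tsum_nat_add (f := f) (t + 1) hsummable
  have htsum : ∑' d, f d = 6 / π ^ 2 := hsum.tsum_eq
  have hrange : Finset.range (t + 1) = insert 0 (Finset.Icc 1 t) := by
    ext a
    simp only [Finset.mem_range, Finset.mem_insert, Finset.mem_Icc]
    omega
  have h00 : f 0 = 0 := by simp [hf]
  have hIcc : ∑ i ∈ Finset.range (t + 1), f i = ∑ d ∈ Finset.Icc 1 t, f d := by
    rw [hrange, Finset.sum_insert (by simp), h00, zero_add]
  have hbase : Summable (fun n : ℕ => (1 : ℝ) / (n : ℝ) ^ 2) :=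
    Real.summable_one_div_nat_pow.mpr (by norm_num)
  have hg : Summable (fun i : ℕ => (1 : ℝ) / ((i + (t + 1) : ℕ) : ℝ) ^ 2) :=
    (summable_nat_add_iff (t + 1)).mpr hbase
  have hftail : Summable (fun i : ℕ => f (i + (t + 1))) :=
    (summable_nat_add_iff (t + 1)).mpr hsummable
  have hbound : ∀ i : ℕ, -((1 : ℝ) / ((i + (t + 1) : ℕ) : ℝ) ^ 2) ≤ f (i + (t + 1)) := by
    intro i
    have habs : |(μ (i + (t + 1)) : ℤ)| ≤ 1 := ArithmeticFunction.abs_moebius_le_one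
    have habs' : -(1 : ℝ) ≤ (μ (i + (t + 1)) : ℝ) := by
      have := neg_abs_le (μ (i + (t + 1)) : ℤ)
      have h2 : (-1 : ℤ) ≤ μ (i + (t + 1)) := by omega
      exact_mod_cast h2
    have hpos : (0 : ℝ) < ((i + (t + 1) : ℕ) : ℝ) ^ 2 := by
      have : 0 < i + (t + 1) := by omega
      positivity
    rw [hf]
    rw [show -((1 : ℝ) / ((i + (t + 1) : ℕ) : ℝ) ^ 2)
      = (-1 : ℝ) / ((i + (t + 1) : ℕ) : ℝ) ^ 2 by ring]
    exact div_le_div_of_nonneg_right habs' hpos.le |>.trans_eq rfl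
  have hgle : ∑' i : ℕ, (1 : ℝ) / ((i + (t + 1) : ℕ) : ℝ) ^ 2 ≤ 1 / (t : ℝ) := by
    apply Real.tsum_le_of_sum_range_le (fun n => by positivity)
    intro n
    have := tail_partial t ht n
    refine le_trans (le_of_eq ?_) this
    apply Finset.sum_congr rfl
    intro i _
    push_cast
    ring_nf
  have htail : -(1 / (t : ℝ)) ≤ ∑' i : ℕ, f (i + (t + 1)) := by
    have h1 : ∑' i : ℕ, -((1 : ℝ) / ((i + (t + 1) : ℕ) : ℝ) ^ 2)
        ≤ ∑' i : ℕ, f (i + (t + 1)) := Summable.tsum_le_tsum hbound hg.neg hftail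
    rw [tsum_neg] at h1
    linarith
  rw [hIcc, htsum] at hsplit
  linarith

lemma term_bound {x : ℝ} (hx : 1 ≤ x) (d N : ℕ) (hd : 1 ≤ d) (hdx : (d : ℝ) ≤ x)
    (hN1 : (N : ℝ) ≤ x / d) (hN2 : x / d < (N : ℝ) + 1) :
    (μ d : ℝ) * d * ((N : ℝ) * ((N : ℝ) + 1) * (2 * (N : ℝ) + 1) / 6)
      ≤ (μ d : ℝ) * (x ^ 3 / (3 * (d : ℝ) ^ 2)) + x ^ 2 / (2 * (d : ℝ)) + x / 6 := by
  have hd0 : (0 : ℝ) < d := by exact_mod_cast hd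
  have hy1 : 1 ≤ x / d := (one_le_div hd0).mpr hdx
  set y : ℝ := x / d with hy
  have hxy : x = d * y := by rw [hy]; field_simp
  have hx3 : x ^ 3 / (3 * (d : ℝ) ^ 2) = (d : ℝ) * y ^ 3 / 3 := by
    rw [hxy]; field_simp
  have hx2 : x ^ 2 / (2 * (d : ℝ)) = (d : ℝ) * y ^ 2 / 2 := by
    rw [hxy]; field_simp
  have hx1 : x / 6 = (d : ℝ) * y / 6 := by rw [hxy]
  rw [hx3, hx2, hx1]
  have hN0 : (0 : ℝ) ≤ N := Nat.cast_nonneg N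
  rcases ArithmeticFunction.moebius_eq_or d with h | h | h <;> rw [h] <;> push_cast
  · have h1 : (0 : ℝ) ≤ (d : ℝ) * y ^ 2 / 2 := by positivity
    have h2 : (0 : ℝ) ≤ (d : ℝ) * y / 6 := by positivity
    nlinarith
  · have hyN : (N : ℝ) ≤ y := hN1
    nlinarith [mul_nonneg (sub_nonneg.mpr hyN) (sq_nonneg y),
      mul_nonneg (sub_nonneg.mpr hyN) (sq_nonneg (N : ℝ)),
      mul_nonneg (sub_nonneg.mpr hyN) (mul_nonneg hN0 (le_trans hN0 (le_of_eq rfl))),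
      mul_nonneg (sub_nonneg.mpr hyN) hN0, hd0.le]
  · have hyN : y ≤ (N : ℝ) + 1 := hN2.le
    nlinarith [mul_nonneg (sub_nonneg.mpr hyN) (sq_nonneg y),
      mul_nonneg (sub_nonneg.mpr hyN) (sq_nonneg ((N : ℝ) + 1)),
      mul_nonneg (sub_nonneg.mpr hyN) hN0, hd0.le, hy1,
      mul_nonneg (sub_nonneg.mpr hyN) (mul_nonneg hN0 hN0),
      mul_nonneg hN0 hN0]

end MulTotientAux

open MulTotientAux ArithmeticFunction in
open scoped ArithmeticFunction.Moebius in
set_option maxHeartbeats 1000000 in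
theorem mul_totient_sum_le (x : ℝ) (hx : 1 ≤ x) :
    ∑ n ∈ Finset.Icc 1 ⌊x⌋₊, (n : ℝ) * (Nat.totient n : ℝ) ≤
      2 / Real.pi ^ 2 * x ^ 3 + 1 / 2 * x ^ 2 * Real.log x + x ^ 2 := by
  have hx0 : (0 : ℝ) ≤ x := by linarith
  set t := ⌊x⌋₊ with htdef
  have ht1 : 1 ≤ t := Nat.le_floor (by exact_mod_cast hx)
  have htx : (t : ℝ) ≤ x := Nat.floor_le hx0
  have hxt : x < (t : ℝ) + 1 := Nat.lt_floor_add_one x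
  have hπ : (0 : ℝ) < π ^ 2 := by positivity
  have hlogx : (0 : ℝ) ≤ Real.log x := Real.log_nonneg hx
  by_cases hbig : 3 ≤ t
  swap
  · -- small cases t = 1 or t = 2
    have hcube : (0 : ℝ) ≤ 2 / π ^ 2 * x ^ 3 := by positivity
    have hmid : (0 : ℝ) ≤ 1 / 2 * x ^ 2 * Real.log x := by positivity
    have ht12 : t = 1 ∨ t = 2 := by omega
    rcases ht12 with h | h <;> rw [h]
    · rw [show Finset.Icc 1 1 = ({1} : Finset ℕ) by decide]
      simp only [Finset.sum_singleton, Nat.totient_one, Nat.cast_one, mul_one]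
      nlinarith
    · rw [show Finset.Icc 1 2 = ({1, 2} : Finset ℕ) by decide]
      have hx2 : (2 : ℝ) ≤ x := by
        have : ((2 : ℕ) : ℝ) ≤ x := h ▸ htx
        exact_mod_cast this
      rw [Finset.sum_pair (by norm_num : (1:ℕ) ≠ 2)]
      simp only [Nat.totient_one, Nat.totient_two, Nat.cast_one, Nat.cast_ofNat, mul_one]
      nlinarith
  · -- main case t ≥ 3
    have ht0 : (0 : ℝ) < t := by positivity
    have ht3 : (3 : ℝ) ≤ t := by exact_mod_cast hbig
    -- Step 1: rewrite the sum
    have hsum1 : ∑ n ∈ Finset.Icc 1 t, (n : ℝ) * (Nat.totient n : ℝ)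
        = ∑ d ∈ Finset.Icc 1 t, ∑ m ∈ Finset.Icc 1 (t / d), (μ d : ℝ) * d * (m : ℝ) ^ 2 := by
      rw [← swap_sum]
      apply Finset.sum_congr rfl
      intro n hn
      rw [Finset.mem_Icc] at hn
      have hn0 : 0 < n := hn.1
      rw [← totient_moebius n hn0, Finset.mul_sum]
      apply Finset.sum_congr rfl
      intro p hp
      rw [Nat.mem_divisorsAntidiagonal] at hp
      obtain ⟨hpe, -⟩ := hp
      rw [← hpe]
      push_cast
      ring
    have hsum2 : ∑ d ∈ Finset.Icc 1 t, ∑ m ∈ Finset.Icc 1 (t / d), (μ d : ℝ) * d * (m : ℝ) ^ 2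
        = ∑ d ∈ Finset.Icc 1 t, (μ d : ℝ) * d *
            (((t / d : ℕ) : ℝ) * (((t / d : ℕ) : ℝ) + 1) * (2 * ((t / d : ℕ) : ℝ) + 1) / 6) := by
      apply Finset.sum_congr rfl
      intro d _
      rw [← Finset.mul_sum, sq_sum_Icc]
    -- Step 2: termwise bound
    have hstep : ∑ d ∈ Finset.Icc 1 t, (μ d : ℝ) * d *
            (((t / d : ℕ) : ℝ) * (((t / d : ℕ) : ℝ) + 1) * (2 * ((t / d : ℕ) : ℝ) + 1) / 6)
        ≤ ∑ d ∈ Finset.Icc 1 t,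
            ((μ d : ℝ) * (x ^ 3 / (3 * (d : ℝ) ^ 2)) + x ^ 2 / (2 * (d : ℝ)) + x / 6) := by
      apply Finset.sum_le_sum
      intro d hd
      rw [Finset.mem_Icc] at hd
      obtain ⟨hd1, hd2⟩ := hd
      have hd0 : (0 : ℝ) < d := by exact_mod_cast hd1
      have hdx : (d : ℝ) ≤ x := le_trans (by exact_mod_cast hd2) htx
      have hNd : t / d = ⌊x / (d : ℝ)⌋₊ := by
        rw [Nat.floor_div_natCast x d]
      have hN1 : ((t / d : ℕ) : ℝ) ≤ x / d := by
        rw [hNd]; exact Nat.floor_le (by positivity)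
      have hN2 : x / d < ((t / d : ℕ) : ℝ) + 1 := by
        rw [hNd]; exact Nat.lt_floor_add_one _
      exact term_bound hx d (t / d) hd1 hdx hN1 hN2
    -- Step 3: split the sum
    have hsplit : ∑ d ∈ Finset.Icc 1 t,
            ((μ d : ℝ) * (x ^ 3 / (3 * (d : ℝ) ^ 2)) + x ^ 2 / (2 * (d : ℝ)) + x / 6)
        = x ^ 3 / 3 * (∑ d ∈ Finset.Icc 1 t, (μ d : ℝ) / (d : ℝ) ^ 2)
          + x ^ 2 / 2 * (∑ d ∈ Finset.Icc 1 t, (1 : ℝ) / d) + x / 6 * t := by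
      rw [Finset.sum_add_distrib, Finset.sum_add_distrib, Finset.mul_sum, Finset.mul_sum]
      congr 1
      · congr 1
        · apply Finset.sum_congr rfl; intro d _; ring
        · apply Finset.sum_congr rfl; intro d _; ring
      · rw [Finset.sum_const, Nat.card_Icc]
        simp only [Nat.add_sub_cancel, nsmul_eq_mul]
        ring
    -- Step 4: bounds on the two sums
    have hmoeb := moebius_partial t ht1
    have hharm : ∑ d ∈ Finset.Icc 1 t, (1 : ℝ) / d ≤ Real.log x + 3 / 2 - Real.log 2 := by
      have h1 := harmonic_bound t (by omega)
      have h2 : Real.log t ≤ Real.log x := Real.log_le_log ht0 htx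
      linarith
    have hx3 : (0 : ℝ) ≤ x ^ 3 / 3 := by positivity
    have hx2' : (0 : ℝ) ≤ x ^ 2 / 2 := by positivity
    -- Step 5: numeric finish
    have hlog2 : (0.6931471803 : ℝ) < Real.log 2 := Real.log_two_gt_d9
    have key : x ^ 3 / 3 * (6 / π ^ 2 + 1 / (t : ℝ))
          + x ^ 2 / 2 * (Real.log x + 3 / 2 - Real.log 2) + x / 6 * t
        ≤ 2 / π ^ 2 * x ^ 3 + 1 / 2 * x ^ 2 * Real.log x + x ^ 2 := by
      have hc : (3 / 2 - Real.log 2 : ℝ) ≤ 0.8068528197 := by linarith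
      set T : ℝ := (t : ℝ) with hT
      have hxle : x ≤ T + 1 := hxt.le
      have hA : (0 : ℝ) ≤ (x - T) * (T + 1 - x) :=
        mul_nonneg (by linarith) (by linarith)
      have hpoly : 2 * x ^ 3 + 3 * T * x ^ 2 * (3 / 2 - Real.log 2) + T ^ 2 * x
          ≤ 6 * T * x ^ 2 := by
        have hc2 : (3 / 2 - Real.log 2 : ℝ) ≤ 807 / 1000 := by linarith
        have hc' : 3 * T * x ^ 2 * (3 / 2 - Real.log 2) ≤ 3 * T * x ^ 2 * (807 / 1000) :=
          mul_le_mul_of_nonneg_left hc2 (by positivity)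
        have h1 : (0 : ℝ) ≤ x * ((x - T) * (T + 1 - x)) := mul_nonneg hx0 hA
        have h2 : (0 : ℝ) ≤ x * T * (T + 1 - x) :=
          mul_nonneg (mul_nonneg hx0 (by linarith)) (by linarith)
        have h3 : (0 : ℝ) ≤ x * (T + 1 - x) := mul_nonneg hx0 (by linarith)
        have h4 : (0 : ℝ) ≤ x * T * (T - 3) :=
          mul_nonneg (mul_nonneg hx0 (by linarith)) (by linarith)
        have h5 : (0 : ℝ) ≤ x * (T - 3) := mul_nonneg hx0 (by linarith)
        linarith [hc', h1, h2, h3, h4, h5, hx0]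
      have e1 : x ^ 3 / (3 * T) + x ^ 2 * (3 / 2 - Real.log 2) / 2 + x * T / 6
          = (2 * x ^ 3 + 3 * T * x ^ 2 * (3 / 2 - Real.log 2) + T ^ 2 * x) / (6 * T) := by
        field_simp
        ring
      have e2 : x ^ 3 / (3 * T) + x ^ 2 * (3 / 2 - Real.log 2) / 2 + x * T / 6 ≤ x ^ 2 := by
        rw [e1, div_le_iff₀ (by positivity)]
        linarith [hpoly]
      have e3 : x ^ 3 / 3 * (1 / T) = x ^ 3 / (3 * T) := by
        field_simp
      have expand : x ^ 3 / 3 * (6 / π ^ 2 + 1 / T)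
            + x ^ 2 / 2 * (Real.log x + 3 / 2 - Real.log 2) + x / 6 * T
          = 2 / π ^ 2 * x ^ 3 + 1 / 2 * x ^ 2 * Real.log x
            + (x ^ 3 / 3 * (1 / T) + x ^ 2 * (3 / 2 - Real.log 2) / 2 + x * T / 6) := by
        ring
      rw [expand, e3]
      linarith [e2]
    calc ∑ n ∈ Finset.Icc 1 t, (n : ℝ) * (Nat.totient n : ℝ)
        = ∑ d ∈ Finset.Icc 1 t, (μ d : ℝ) * d *
            (((t / d : ℕ) : ℝ) * (((t / d : ℕ) : ℝ) + 1) * (2 * ((t / d : ℕ) : ℝ) + 1) / 6) := by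
          rw [hsum1, hsum2]
      _ ≤ ∑ d ∈ Finset.Icc 1 t,
            ((μ d : ℝ) * (x ^ 3 / (3 * (d : ℝ) ^ 2)) + x ^ 2 / (2 * (d : ℝ)) + x / 6) := hstep
      _ = x ^ 3 / 3 * (∑ d ∈ Finset.Icc 1 t, (μ d : ℝ) / (d : ℝ) ^ 2)
          + x ^ 2 / 2 * (∑ d ∈ Finset.Icc 1 t, (1 : ℝ) / d) + x / 6 * t := hsplit
      _ ≤ x ^ 3 / 3 * (6 / π ^ 2 + 1 / (t : ℝ))
          + x ^ 2 / 2 * (Real.log x + 3 / 2 - Real.log 2) + x / 6 * t := by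
          have := mul_le_mul_of_nonneg_left hmoeb hx3
          have := mul_le_mul_of_nonneg_left hharm hx2'
          linarith
      _ ≤ 2 / π ^ 2 * x ^ 3 + 1 / 2 * x ^ 2 * Real.log x + x ^ 2 := key
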